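/- Let m, n be positive integers and h a norm on ℝ^m with generated norm H on ℝ^{m×n}. Let φ : ℝ^n → ℝ^m be Lipschitz. Then the following are equivalent: (i) θ · (φ(y) − φ(x)) ≤ h(θ) |y − x| for all θ ∈ ℝ^m and all x, y ∈ ℝ^n; (ii) for Lebesgue-almost every x ∈ ℝ^n, φ is differentiable at x and its derivative Dφ(x) ∈ ℝ^{m×n} satisfies Dφ(x) ∈ ∂H(0), i.e. h_*(Dφ(x) u) ≤ |u| for all u ∈ ℝ^n. -/

import Mathlib

open MeasureTheory

noncomputable section

/-- `ℝ^n` with the Euclidean norm. -/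
abbrev Euc (n : ℕ) := EuclideanSpace ℝ (Fin n)

/-- `h` is a norm on `ℝ^m`. -/
def IsNorm {m : ℕ} (h : (Fin m → ℝ) → ℝ) : Prop :=
  (∀ x y, h (x + y) ≤ h x + h y) ∧ (∀ (c : ℝ) (x), h (c • x) = |c| * h x) ∧
    ∀ x, h x = 0 → x = 0

/-- The dual norm `h_*` of `h`: `h_*(g) = sup { g·θ : h θ ≤ 1 }`. -/
def dualNorm {m : ℕ} (h : (Fin m → ℝ) → ℝ) (g : Fin m → ℝ) : ℝ :=
  sSup {r | ∃ θ : Fin m → ℝ, h θ ≤ 1 ∧ r = ∑ i, g i * θ i}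

/-- Matrix-vector product `M u`. -/
def matVec {m n : ℕ} (M : Fin m → Fin n → ℝ) (u : Euc n) : Fin m → ℝ :=
  fun i => ∑ j, M i j * u j

/-- Frobenius inner product `M : N`. -/
def frob {m n : ℕ} (M N : Fin m → Fin n → ℝ) : ℝ := ∑ i, ∑ j, M i j * N i j

/-- `M ∈ ∂H(0)`, i.e. `h_*(M u) ≤ 1` for all `|u| ≤ 1`. -/
def inSubdiffH {m n : ℕ} (h : (Fin m → ℝ) → ℝ) (M : Fin m → Fin n → ℝ) : Prop :=
  ∀ u : Euc n, ‖u‖ ≤ 1 → dualNorm h (matVec M u) ≤ 1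

/-- The norm `H` on `ℝ^{m×n}` generated by `h`:
`H(N) = sup { M:N : M ∈ ∂H(0) }`. -/
def genNorm {m n : ℕ} (h : (Fin m → ℝ) → ℝ) (N : Fin m → Fin n → ℝ) : ℝ :=
  sSup {r | ∃ M : Fin m → Fin n → ℝ, inSubdiffH h M ∧ r = frob M N}

/-- The rank-one matrix `θ ⊗ e`. -/
def outer {m n : ℕ} (θ : Fin m → ℝ) (e : Euc n) : Fin m → Fin n → ℝ :=
  fun i j => θ i * e j

/-- An `ℝ^{m×n}`-valued Borel measure on `ℝ^n`, given by its component signed measures. -/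
abbrev MatMeas (m n : ℕ) := Fin m → Fin n → MeasureTheory.SignedMeasure (Euc n)

/-- An `ℝ^m`-valued Borel measure on `ℝ^n`, given by its component signed measures. -/
abbrev VecMeas (m n : ℕ) := Fin m → MeasureTheory.SignedMeasure (Euc n)

/-- Integral of a function against a signed measure (via the Jordan decomposition). -/
def sInt {n : ℕ} (ν : MeasureTheory.SignedMeasure (Euc n)) (f : Euc n → ℝ) : ℝ :=
  ∫ x, f x ∂ν.toJordanDecomposition.posPart - ∫ x, f x ∂ν.toJordanDecomposition.negPart

/-- The total variation `|F|_H` of `F` with respect to the norm `H` generated by `h`: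
the supremum of `Σ_k H(F(B_k))` over countable Borel partitions `(B_k)` of `ℝ^n`. -/
def tvH {m n : ℕ} (h : (Fin m → ℝ) → ℝ) (F : MatMeas m n) : ℝ :=
  sSup {r | ∃ B : ℕ → Set (Euc n), (∀ k, MeasurableSet (B k)) ∧
    Pairwise (Function.onFun Disjoint B) ∧ (⋃ k, B k) = Set.univ ∧
    r = ∑' k, genNorm h (fun i j => F i j (B k))}

/-- `F` is supported in `K`: it vanishes on Borel sets disjoint from `K`. -/
def suppIn {m n : ℕ} (F : MatMeas m n) (K : Set (Euc n)) : Prop :=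
  ∀ B : Set (Euc n), MeasurableSet B → Disjoint B K → ∀ i j, F i j B = 0

/-- `F` is compactly supported. -/
def suppInCpt {m n : ℕ} (F : MatMeas m n) : Prop :=
  ∃ K : Set (Euc n), IsCompact K ∧ suppIn F K

/-- `F₀` is compactly supported. -/
def vSuppInCpt {m n : ℕ} (F0 : VecMeas m n) : Prop :=
  ∃ K : Set (Euc n), IsCompact K ∧
    ∀ B : Set (Euc n), MeasurableSet B → Disjoint B K → ∀ i, F0 i B = 0

/-- The Jacobian matrix `Dψ(x) ∈ ℝ^{m×n}` of `ψ : ℝ^n → ℝ^m`. -/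
def jac {m n : ℕ} (ψ : Euc n → (Fin m → ℝ)) (x : Euc n) : Fin m → Fin n → ℝ :=
  fun i j => fderiv ℝ ψ x (EuclideanSpace.single j 1) i

/-- `∂F = F₀`, i.e. `∫ Dψ : dF = ∫ ψ · dF₀` for all smooth compactly supported `ψ`. -/
def isBoundary {m n : ℕ} (F : MatMeas m n) (F0 : VecMeas m n) : Prop :=
  ∀ ψ : Euc n → (Fin m → ℝ), ContDiff ℝ (⊤ : ℕ∞) ψ → HasCompactSupport ψ →
    (∑ i, ∑ j, sInt (F i j) fun x => jac ψ x i j) = ∑ i, sInt (F0 i) fun x => ψ x i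

/-- `φ` is an admissible dual potential: `h_*(φ(y) - φ(x)) ≤ |y - x|`. -/
def admissible {m n : ℕ} (h : (Fin m → ℝ) → ℝ) (φ : Euc n → Fin m → ℝ) : Prop :=
  ∀ x y : Euc n, dualNorm h (φ y - φ x) ≤ ‖y - x‖

/-- The dual objective `∫ φ · dF₀`. -/
def intDual {m n : ℕ} (F0 : VecMeas m n) (φ : Euc n → Fin m → ℝ) : ℝ :=
  ∑ i, sInt (F0 i) fun x => φ x i

section aux
variable {m : ℕ} {h : (Fin m → ℝ) → ℝ}

lemma IsNorm.zero (hh : IsNorm h) : h 0 = 0 := by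
  have := hh.2.1 0 0
  simpa using this

lemma IsNorm.nonneg (hh : IsNorm h) (θ : Fin m → ℝ) : 0 ≤ h θ := by
  have h1 := hh.1 θ (-θ)
  have h2 := hh.2.1 (-1) θ
  simp only [add_neg_cancel, hh.zero] at h1
  have : h (-θ) = h θ := by simpa using h2
  linarith [h1, this.ge]

lemma IsNorm.sum_le (hh : IsNorm h) {ι : Type*} (s : Finset ι) (g : ι → (Fin m → ℝ)) :
    h (∑ i ∈ s, g i) ≤ ∑ i ∈ s, h (g i) := by
  classical
  induction s using Finset.cons_induction with
  | empty => simp [hh.zero]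
  | cons a s ha ih =>
    rw [Finset.sum_cons, Finset.sum_cons]
    exact le_trans (hh.1 _ _) (by linarith)

lemma IsNorm.upper (hh : IsNorm h) : ∃ K : ℝ, 0 ≤ K ∧ ∀ θ, h θ ≤ K * ‖θ‖ := by
  refine ⟨∑ i, h (Pi.single i 1), Finset.sum_nonneg fun i _ => hh.nonneg _, fun θ => ?_⟩
  have hθ : θ = ∑ i, θ i • (Pi.single i 1 : Fin m → ℝ) := by
    ext j; simp [Finset.sum_apply, Pi.single_apply]
  calc h θ = h (∑ i, θ i • (Pi.single i 1 : Fin m → ℝ)) := by rw [← hθ]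
    _ ≤ ∑ i, h (θ i • (Pi.single i 1 : Fin m → ℝ)) := hh.sum_le _ _
    _ = ∑ i, |θ i| * h (Pi.single i 1) := by simp [hh.2.1]
    _ ≤ ∑ i, ‖θ‖ * h (Pi.single i 1) := by
        refine Finset.sum_le_sum fun i _ => ?_
        exact mul_le_mul_of_nonneg_right (norm_le_pi_norm θ i) (hh.nonneg _)
    _ = (∑ i, h (Pi.single i 1)) * ‖θ‖ := by rw [← Finset.mul_sum, mul_comm]

lemma IsNorm.continuous (hh : IsNorm h) : Continuous h := by
  obtain ⟨K, hK0, hK⟩ := hh.upper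
  have key : ∀ x y : Fin m → ℝ, h x - h y ≤ K * ‖x - y‖ := fun x y => by
    have h1 := hh.1 (x - y) y
    simp only [sub_add_cancel] at h1
    have h2 := hK (x - y)
    linarith
  apply Metric.continuous_iff.2
  intro b ε hε
  refine ⟨ε / (K + 1), by positivity, fun a hab => ?_⟩
  have h1 := key a b
  have h2 := key b a
  have hn : ‖b - a‖ = ‖a - b‖ := by rw [← norm_neg]; ring_nf
  have hd : ‖a - b‖ = dist a b := (dist_eq_norm a b).symm
  have hKd : K * ‖a - b‖ < ε := by
    have : K * ‖a - b‖ ≤ (K + 1) * dist a b := by nlinarith [dist_nonneg (x := a) (y := b)]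
    have : (K + 1) * dist a b < (K + 1) * (ε / (K + 1)) := by
      apply mul_lt_mul_of_pos_left hab; positivity
    have he : (K + 1) * (ε / (K + 1)) = ε := by field_simp
    linarith
  rw [Real.dist_eq, abs_sub_lt_iff]
  constructor <;> nlinarith

lemma IsNorm.lower (hm : 0 < m) (hh : IsNorm h) : ∃ c : ℝ, 0 < c ∧ ∀ θ, c * ‖θ‖ ≤ h θ := by
  have hsc : IsCompact (Metric.sphere (0 : Fin m → ℝ) 1) := isCompact_sphere _ _
  have hsne : (Metric.sphere (0 : Fin m → ℝ) 1).Nonempty := by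
    refine ⟨Pi.single ⟨0, hm⟩ 1, ?_⟩
    simp only [mem_sphere_iff_norm, sub_zero]
    rw [Pi.norm_single]; simp
  obtain ⟨x₀, hx₀s, hx₀min⟩ := hsc.exists_isMinOn hsne hh.continuous.continuousOn
  have hx₀norm : ‖x₀‖ = 1 := by simpa [mem_sphere_iff_norm] using hx₀s
  have hc : 0 < h x₀ := by
    rcases lt_or_eq_of_le (hh.nonneg x₀) with h' | h'
    · exact h'
    · exfalso
      have := hh.2.2 x₀ h'.symm
      rw [this] at hx₀norm; simp at hx₀norm
  refine ⟨h x₀, hc, fun θ => ?_⟩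
  rcases eq_or_ne θ 0 with rfl | hθ
  · simp [hh.zero]
  · have hθn : ‖θ‖ ≠ 0 := norm_ne_zero_iff.2 hθ
    have hmem : ‖θ‖⁻¹ • θ ∈ Metric.sphere (0 : Fin m → ℝ) 1 := by
      simp [mem_sphere_iff_norm, norm_smul, abs_of_nonneg (inv_nonneg.2 (norm_nonneg θ)),
        inv_mul_cancel₀ hθn]
    have hmin : h x₀ ≤ h (‖θ‖⁻¹ • θ) := hx₀min hmem
    rw [hh.2.1, abs_of_nonneg (inv_nonneg.2 (norm_nonneg θ))] at hmin
    have hpos0 : (0:ℝ) < ‖θ‖ := lt_of_le_of_ne (norm_nonneg θ) (Ne.symm hθn)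
    calc h x₀ * ‖θ‖ ≤ (‖θ‖⁻¹ * h θ) * ‖θ‖ := by nlinarith
      _ = h θ := by field_simp

end aux

section dual
variable {m : ℕ} {h : (Fin m → ℝ) → ℝ}

lemma dualSet_nonempty (hh : IsNorm h) (g : Fin m → ℝ) :
    {r | ∃ θ : Fin m → ℝ, h θ ≤ 1 ∧ r = ∑ i, g i * θ i}.Nonempty :=
  ⟨0, 0, by simp [hh.zero]⟩

lemma dualSet_bddAbove (hm : 0 < m) (hh : IsNorm h) (g : Fin m → ℝ) :
    BddAbove {r | ∃ θ : Fin m → ℝ, h θ ≤ 1 ∧ r = ∑ i, g i * θ i} := by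
  obtain ⟨c, hc, hcl⟩ := hh.lower hm
  refine ⟨∑ i, |g i| * c⁻¹, fun r ⟨θ, hθ1, hr⟩ => ?_⟩
  subst hr
  refine Finset.sum_le_sum fun i _ => ?_
  have hθi : |θ i| ≤ c⁻¹ := by
    have h1 : |θ i| ≤ ‖θ‖ := norm_le_pi_norm θ i
    have h2 : c * ‖θ‖ ≤ h θ := hcl θ
    rw [← one_div, le_div_iff₀ hc]; nlinarith
  calc g i * θ i ≤ |g i * θ i| := le_abs_self _
    _ = |g i| * |θ i| := abs_mul _ _
    _ ≤ |g i| * c⁻¹ := by nlinarith [abs_nonneg (g i)]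

lemma le_dualNorm (hm : 0 < m) (hh : IsNorm h) {θ : Fin m → ℝ} (hθ : h θ ≤ 1)
    (g : Fin m → ℝ) : ∑ i, g i * θ i ≤ dualNorm h g :=
  le_csSup (dualSet_bddAbove hm hh g) ⟨θ, hθ, rfl⟩

lemma dualNorm_le (hh : IsNorm h)
    {g : Fin m → ℝ} {a : ℝ} (ha : ∀ θ : Fin m → ℝ, h θ ≤ 1 → ∑ i, g i * θ i ≤ a) :
    dualNorm h g ≤ a :=
  csSup_le (dualSet_nonempty hh g) (fun r ⟨θ, hθ1, hr⟩ => hr ▸ ha θ hθ1)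

lemma pairing_le (hm : 0 < m) (hh : IsNorm h) (θ g : Fin m → ℝ) :
    ∑ i, θ i * g i ≤ h θ * dualNorm h g := by
  rcases eq_or_lt_of_le (hh.nonneg θ) with h0 | h0
  · have hθ0 : θ = 0 := hh.2.2 θ h0.symm
    simp [hθ0, ← h0, hh.zero]
  · have hθ' : h ((h θ)⁻¹ • θ) ≤ 1 := by
      rw [hh.2.1, abs_of_nonneg (inv_nonneg.2 h0.le), inv_mul_cancel₀ h0.ne']
    have := le_dualNorm hm hh hθ' g
    have hsum : ∑ i, g i * ((h θ)⁻¹ • θ) i = (h θ)⁻¹ * ∑ i, θ i * g i := by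
      rw [Finset.mul_sum]; refine Finset.sum_congr rfl fun i _ => ?_
      simp [Pi.smul_apply, smul_eq_mul]; ring
    rw [hsum] at this
    calc ∑ i, θ i * g i = h θ * ((h θ)⁻¹ * ∑ i, θ i * g i) := by field_simp
      _ ≤ h θ * dualNorm h g := mul_le_mul_of_nonneg_left this h0.le

end dual

section main
open Filter Metric Set Topology
variable {m n : ℕ}

def Lmap (θ : Fin m → ℝ) : (Fin m → ℝ) →L[ℝ] ℝ := ∑ i, θ i • ContinuousLinearMap.proj i

lemma Lmap_apply (θ w : Fin m → ℝ) : Lmap θ w = ∑ i, θ i * w i := by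
  simp [Lmap, ContinuousLinearMap.sum_apply, smul_eq_mul]

lemma forward (hm : 0 < m) (h : (Fin m → ℝ) → ℝ) (hh : IsNorm h)
    (φ : Euc n → Fin m → ℝ) {K : NNReal} (hK : LipschitzWith K φ)
    (hyp : ∀ (θ : Fin m → ℝ) (x y : Euc n), (∑ i, θ i * (φ y i - φ x i)) ≤ h θ * ‖y - x‖) :
    ∀ᵐ x ∂(volume : Measure (Euc n)), DifferentiableAt ℝ φ x ∧
      ∀ u : Euc n, dualNorm h (fderiv ℝ φ x u) ≤ ‖u‖ := by
  filter_upwards [hK.ae_differentiableAt] with x hx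
  refine ⟨hx, fun u => ?_⟩
  apply dualNorm_le hh
  intro θ hθ1
  set d := ∑ i, θ i * fderiv ℝ φ x u i with hd
  have hgoal : ∑ i, fderiv ℝ φ x u i * θ i = d := Finset.sum_congr rfl fun i _ => mul_comm _ _
  rw [hgoal]
  have hc : HasDerivAt (fun t : ℝ => x + t • u) u 0 := by
    simpa using ((hasDerivAt_id (0:ℝ)).smul_const u).const_add x
  have hφc : HasDerivAt (fun t : ℝ => φ (x + t • u)) (fderiv ℝ φ x u) 0 := by
    have h0 : x + (0:ℝ) • u = x := by simp
    have h1 := hx.hasFDerivAt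
    rw [← h0] at h1
    have h2 := h1.comp_hasDerivAt 0 hc
    simp only [zero_smul, add_zero] at h2
    exact h2
  have hg : HasDerivAt (fun t : ℝ => ∑ i, θ i * φ (x + t • u) i) d 0 := by
    have h2 := (Lmap θ).hasFDerivAt.comp_hasDerivAt 0 hφc
    have he : (fun t : ℝ => Lmap θ (φ (x + t • u))) = fun t : ℝ => ∑ i, θ i * φ (x + t • u) i :=
      funext fun t => Lmap_apply θ _
    have hv : Lmap θ (fderiv ℝ φ x u) = d := Lmap_apply θ _
    rw [← he, ← hv]
    exact h2
  have hT : Tendsto (slope (fun t : ℝ => ∑ i, θ i * φ (x + t • u) i) 0) (𝓝[>] 0) (𝓝 d) :=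
    (hasDerivAt_iff_tendsto_slope.1 hg).mono_left
      (nhdsWithin_mono 0 fun t ht => by simpa using (ne_of_gt ht))
  refine le_of_tendsto hT ?_
  filter_upwards [self_mem_nhdsWithin] with t (ht : 0 < t)
  have hb := hyp θ x (x + t • u)
  have hnorm : ‖x + t • u - x‖ = t * ‖u‖ := by
    simp [norm_smul, abs_of_pos ht]
  rw [hnorm] at hb
  have hsum : ∑ i, θ i * (φ (x + t • u) i - φ x i)
      = (∑ i, θ i * φ (x + t • u) i) - ∑ i, θ i * φ x i := by
    rw [← Finset.sum_sub_distrib]; exact Finset.sum_congr rfl fun i _ => by ring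
  rw [hsum] at hb
  have hslope : slope (fun t : ℝ => ∑ i, θ i * φ (x + t • u) i) 0 t
      = t⁻¹ * ((∑ i, θ i * φ (x + t • u) i) - ∑ i, θ i * φ x i) := by
    rw [slope_def_field]
    simp only [zero_smul, add_zero, sub_zero]
    rw [div_eq_inv_mul]
  rw [hslope]
  have hθ0 := hh.nonneg θ
  calc t⁻¹ * ((∑ i, θ i * φ (x + t • u) i) - ∑ i, θ i * φ x i)
      ≤ t⁻¹ * (h θ * (t * ‖u‖)) := by
        apply mul_le_mul_of_nonneg_left hb (inv_nonneg.2 ht.le)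
    _ = h θ * ‖u‖ := by field_simp
    _ ≤ 1 * ‖u‖ := mul_le_mul_of_nonneg_right hθ1 (norm_nonneg u)
    _ = ‖u‖ := one_mul _

end main

section back
open Filter Metric Set Topology
variable {m n : ℕ}

lemma backward (hm : 0 < m) (h : (Fin m → ℝ) → ℝ) (hh : IsNorm h)
    (φ : Euc n → Fin m → ℝ) {K : NNReal} (hK : LipschitzWith K φ)
    (hyp : ∀ᵐ x ∂(volume : Measure (Euc n)), DifferentiableAt ℝ φ x ∧
      ∀ u : Euc n, dualNorm h (fderiv ℝ φ x u) ≤ ‖u‖)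
    (θ : Fin m → ℝ) (x₀ y₀ : Euc n) :
    (∑ i, θ i * (φ y₀ i - φ x₀ i)) ≤ h θ * ‖y₀ - x₀‖ := by
  classical
  set v : Euc n := y₀ - x₀ with hv
  set f : Euc n → ℝ := fun z => Lmap θ (φ z) with hfdef
  have hC0 : 0 ≤ h θ := hh.nonneg θ
  have hfL : LipschitzWith (‖Lmap θ‖₊ * K) f := (Lmap θ).lipschitz.comp hK
  have hfc : Continuous f := hfL.continuous
  -- Step A: a.e. bound on the line derivative
  have hae : ∀ᵐ z ∂(volume : Measure (Euc n)), lineDeriv ℝ f z v ≤ h θ * ‖v‖ := by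
    filter_upwards [hyp] with z hz
    obtain ⟨hd, hb⟩ := hz
    have hdf : DifferentiableAt ℝ f z := ((Lmap θ).differentiableAt).comp z hd
    rw [hdf.lineDeriv_eq_fderiv]
    have hcomp : fderiv ℝ f z = (Lmap θ).comp (fderiv ℝ φ z) :=
      ((Lmap θ).hasFDerivAt.comp z hd.hasFDerivAt).fderiv
    rw [hcomp]
    calc (Lmap θ).comp (fderiv ℝ φ z) v = ∑ i, θ i * fderiv ℝ φ z v i := Lmap_apply θ _
      _ ≤ h θ * dualNorm h (fderiv ℝ φ z v) := pairing_le hm hh θ _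
      _ ≤ h θ * ‖v‖ := mul_le_mul_of_nonneg_left (hb v) hC0
  -- integrability helpers
  have hIntB : ∀ (c w : Euc n) (r : ℝ), IntegrableOn (fun z => f (z + w)) (ball c r) volume := by
    intro c w r
    have hc : Continuous fun z : Euc n => f (z + w) :=
      hfc.comp (continuous_id.add continuous_const)
    exact (hc.locallyIntegrable.integrableOn_isCompact (isCompact_closedBall c r)).mono_set
      ball_subset_closedBall
  have hIntf : ∀ (c : Euc n) (r : ℝ), IntegrableOn f (ball c r) volume := by
    intro c r
    exact (hfc.locallyIntegrable.integrableOn_isCompact (isCompact_closedBall c r)).mono_set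
      ball_subset_closedBall
  have hIntL : ∀ (c : Euc n) (r : ℝ),
      IntegrableOn (fun z => lineDeriv ℝ f z v) (ball c r) volume := by
    intro c r
    exact ((hfL.locallyIntegrable_lineDeriv v).integrableOn_isCompact
      (isCompact_closedBall c r)).mono_set ball_subset_closedBall
  -- shift identity for set integrals over balls
  have hshift : ∀ (G : Euc n → ℝ) (a : Euc n) (r : ℝ),
      ∫ x in ball (x₀ + a) r, G x = ∫ z in ball x₀ r, G (z + a) := by
    intro G a r
    rw [← integral_indicator measurableSet_ball, ← integral_indicator measurableSet_ball,
      ← integral_add_right_eq_self (fun x => (ball (x₀ + a) r).indicator G x) a]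
    congr 1
    ext z
    by_cases hz : z ∈ ball x₀ r
    · have hz' : z + a ∈ ball (x₀ + a) r := by
        simpa [mem_ball, dist_add_right] using hz
      rw [Set.indicator_of_mem hz', Set.indicator_of_mem hz]
    · have hz' : z + a ∉ ball (x₀ + a) r := by
        simpa [mem_ball, dist_add_right] using hz
      rw [Set.indicator_of_notMem hz', Set.indicator_of_notMem hz]
  -- Step B
  have key : ∀ r : ℝ, 0 < r →
      (∫ z in ball x₀ r, (f (z + v) - f z)) ≤ h θ * ‖v‖ * (volume (ball x₀ r)).toReal := by
    intro r hr
    set volB := (volume (ball x₀ r)).toReal with hvolB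
    have hvolB_eq : ∀ c : Euc n, (volume (ball c r)).toReal = volB := by
      intro c
      rw [hvolB, Measure.addHaar_ball_center volume c, Measure.addHaar_ball_center volume x₀]
    set D := h θ * ‖v‖ * volB with hD
    set F : ℝ → ℝ := fun t => ∫ z in ball x₀ r, f (z + t • v) with hF
    have hFsub : ∀ a b : ℝ, F a - F b = ∫ z in ball x₀ r, (f (z + a • v) - f (z + b • v)) := by
      intro a b
      rw [hF]
      exact (integral_sub (hIntB x₀ (a • v) r) (hIntB x₀ (b • v) r)).symm
    -- slope limit at each t
    have hTend : ∀ t : ℝ, Tendsto (fun s : ℝ => s⁻¹ * (F (t + s) - F t)) (𝓝[>] 0)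
        (𝓝 (∫ w in ball (x₀ + t • v) r, lineDeriv ℝ f w v)) := by
      intro t
      have hg : Integrable ((ball (x₀ + t • v) r).indicator fun _ => (1 : ℝ)) volume := by
        rw [integrable_indicator_iff measurableSet_ball]
        exact integrableOn_const measure_ball_lt_top.ne
      have hT := hfL.integral_inv_smul_sub_mul_tendsto_integral_lineDeriv_mul hg v
      have hlim : (∫ x, lineDeriv ℝ f x v * (ball (x₀ + t • v) r).indicator (fun _ => (1:ℝ)) x)
          = ∫ w in ball (x₀ + t • v) r, lineDeriv ℝ f w v := by
        rw [← integral_indicator measurableSet_ball]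
        congr 1
        ext x
        by_cases hx : x ∈ ball (x₀ + t • v) r <;> simp [hx]
      rw [hlim] at hT
      apply hT.congr
      intro s
      have e1 : ∀ x : Euc n, (s⁻¹ • (f (x + s • v) - f x)) *
          (ball (x₀ + t • v) r).indicator (fun _ => (1:ℝ)) x
          = s⁻¹ • ((ball (x₀ + t • v) r).indicator (fun y => f (y + s • v) - f y) x) := by
        intro x
        by_cases hx : x ∈ ball (x₀ + t • v) r <;>
          simp [hx, Set.indicator_of_mem, Set.indicator_of_notMem, smul_eq_mul]
      rw [integral_congr_ae (Filter.Eventually.of_forall e1), integral_smul,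
        integral_indicator measurableSet_ball]
      have e2 : (∫ x in ball (x₀ + t • v) r, (f (x + s • v) - f x))
          = F (t + s) - F t := by
        rw [hshift (fun y => f (y + s • v) - f y) (t • v) r, hFsub (t + s) t]
        congr 1
        ext z
        rw [add_smul, ← add_assoc]
      rw [e2, smul_eq_mul]
    -- the limit is at most D
    have hIt : ∀ t : ℝ, (∫ w in ball (x₀ + t • v) r, lineDeriv ℝ f w v) ≤ D := by
      intro t
      calc (∫ w in ball (x₀ + t • v) r, lineDeriv ℝ f w v)
          ≤ ∫ _ in ball (x₀ + t • v) r, h θ * ‖v‖ := by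
            apply setIntegral_mono_on_ae (hIntL _ _)
              (integrableOn_const measure_ball_lt_top.ne) measurableSet_ball
            filter_upwards [hae] with w hw _
            exact hw
        _ = h θ * ‖v‖ * volB := by
            rw [setIntegral_const, smul_eq_mul, measureReal_def, hvolB_eq, mul_comm]
        _ = D := hD.symm
    -- F is Lipschitz, hence continuous
    set Kc : ℝ := ((‖Lmap θ‖₊ * K : NNReal) : ℝ) * ‖v‖ * volB with hKc
    have hFlipb : ∀ a b : ℝ, |F a - F b| ≤ Kc * |a - b| := by
      intro a b
      rw [hFsub a b]
      have hbd : ∀ z ∈ ball x₀ r, ‖f (z + a • v) - f (z + b • v)‖ ≤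
          ((‖Lmap θ‖₊ * K : NNReal) : ℝ) * ‖v‖ * |a - b| := by
        intro z _
        have hd := hfL.dist_le_mul (z + a • v) (z + b • v)
        rw [Real.dist_eq, dist_eq_norm] at hd
        have he : z + a • v - (z + b • v) = (a - b) • v := by
          rw [sub_smul]; abel
        rw [he, norm_smul, Real.norm_eq_abs] at hd
        calc ‖f (z + a • v) - f (z + b • v)‖ = |f (z + a • v) - f (z + b • v)| := rfl
          _ ≤ ((‖Lmap θ‖₊ * K : NNReal) : ℝ) * (|a - b| * ‖v‖) := hd
          _ = ((‖Lmap θ‖₊ * K : NNReal) : ℝ) * ‖v‖ * |a - b| := by ring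
      have := norm_setIntegral_le_of_norm_le_const (μ := (volume : Measure (Euc n)))
        measure_ball_lt_top hbd
      calc |∫ z in ball x₀ r, (f (z + a • v) - f (z + b • v))|
          ≤ ((‖Lmap θ‖₊ * K : NNReal) : ℝ) * ‖v‖ * |a - b| * volB := this
        _ = Kc * |a - b| := by rw [hKc]; ring
    have hFc : Continuous F := by
      have : LipschitzWith Kc.toNNReal F := by
        apply LipschitzWith.of_dist_le_mul
        intro a b
        rw [Real.dist_eq, Real.dist_eq]
        calc |F a - F b| ≤ Kc * |a - b| := hFlipb a b
          _ ≤ Kc.toNNReal * |a - b| := by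
              apply mul_le_mul_of_nonneg_right _ (abs_nonneg _)
              rw [Real.coe_toNNReal']
              exact le_max_left _ _
      exact this.continuous
    -- fencing
    have hmvt : ∀ ⦃x⦄, x ∈ Icc (0:ℝ) 1 → F x ≤ F 0 + D * x := by
      apply image_le_of_liminf_slope_right_le_deriv_boundary hFc.continuousOn
      · simp
      · exact (continuous_const.add (continuous_const.mul continuous_id)).continuousOn
      · intro x _
        simpa using (((hasDerivAt_id x).const_mul D).const_add (F 0)).hasDerivWithinAt
      · intro t _ ρ hρ
        have hlt : ∀ᶠ s in 𝓝[>] (0:ℝ), s⁻¹ * (F (t + s) - F t) < ρ :=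
          (hTend t).eventually_lt_const (lt_of_le_of_lt (hIt t) hρ)
        have hmap : Tendsto (fun z : ℝ => z - t) (𝓝[>] t) (𝓝[>] (0:ℝ)) := by
          apply tendsto_nhdsWithin_iff.2
          constructor
          · have h1 : Tendsto (fun z : ℝ => z - t) (𝓝 t) (𝓝 (t - t)) :=
              ((continuous_id.sub continuous_const).tendsto t)
            rw [sub_self] at h1
            exact h1.mono_left nhdsWithin_le_nhds
          · filter_upwards [self_mem_nhdsWithin] with z hz
            exact sub_pos.2 (Set.mem_Ioi.1 hz)
        have hev : ∀ᶠ z in 𝓝[>] t, slope F t z < ρ := by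
          filter_upwards [hmap.eventually hlt] with z hz
          rw [slope_def_field, div_eq_inv_mul]
          have ht' : t + (z - t) = z := by ring
          rw [ht'] at hz
          exact hz
        exact hev.frequently
    have hF1 : F 1 ≤ F 0 + D * 1 := hmvt (right_mem_Icc.2 zero_le_one)
    have h01 : F 1 - F 0 = ∫ z in ball x₀ r, (f (z + v) - f z) := by
      rw [hFsub 1 0]
      congr 1
      ext z
      rw [one_smul, zero_smul, add_zero]
    rw [hD] at hF1
    linarith [h01 ▸ (by linarith : F 1 - F 0 ≤ D), hD ▸ le_refl D]
  -- Step C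
  have final : f (x₀ + v) - f x₀ ≤ h θ * ‖v‖ := by
    by_contra hcon
    push_neg at hcon
    set G : Euc n → ℝ := fun z => f (z + v) - f z with hG
    have hGc : Continuous G := (hfc.comp (continuous_id.add continuous_const)).sub hfc
    set ε := (G x₀ - h θ * ‖v‖) / 2 with hε
    have hGx₀ : G x₀ = f (x₀ + v) - f x₀ := rfl
    have hε0 : 0 < ε := by rw [hε, hGx₀]; linarith
    have hmem : x₀ ∈ G ⁻¹' Set.Ioi (h θ * ‖v‖ + ε) := by
      simp only [Set.mem_preimage, Set.mem_Ioi, hGx₀]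
      rw [hε, hGx₀]
      linarith
    obtain ⟨r, hr0, hball⟩ := Metric.isOpen_iff.1 (isOpen_Ioi.preimage hGc) x₀ hmem
    have hkey := key r hr0
    have hIntG : IntegrableOn G (ball x₀ r) volume :=
      (hIntB x₀ v r).sub (hIntf x₀ r)
    have hlow : (h θ * ‖v‖ + ε) * (volume (ball x₀ r)).toReal ≤ ∫ z in ball x₀ r, G z := by
      have hmono := setIntegral_mono_on
        (integrableOn_const measure_ball_lt_top.ne) hIntG measurableSet_ball
        (fun z hz => (hball hz).le)
      rw [setIntegral_const, smul_eq_mul, mul_comm] at hmono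
      exact hmono
    have hvol : 0 < (volume (ball x₀ r)).toReal :=
      ENNReal.toReal_pos (measure_ball_pos volume x₀ hr0).ne' measure_ball_lt_top.ne
    have : (∫ z in ball x₀ r, G z) ≤ h θ * ‖v‖ * (volume (ball x₀ r)).toReal := hkey
    nlinarith
  -- conclusion
  have hxv : x₀ + v = y₀ := by rw [hv]; abel
  calc ∑ i, θ i * (φ y₀ i - φ x₀ i) = f y₀ - f x₀ := by
        rw [hfdef]
        simp only [Lmap_apply]
        rw [← Finset.sum_sub_distrib]
        exact Finset.sum_congr rfl fun i _ => by ring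
    _ ≤ h θ * ‖v‖ := by rw [← hxv]; exact final
    _ = h θ * ‖y₀ - x₀‖ := by rw [hv]

end back

/-- for Lipschitz `φ`, the constraint
`θ · (φ(y) - φ(x)) ≤ h(θ)|y - x|` for all `θ, x, y` is equivalent to `φ` being
differentiable a.e. with `Dφ(x) ∈ ∂H(0)`, i.e. `h_*(Dφ(x)u) ≤ |u|` for all `u`. -/
theorem statement6 {m n : ℕ} (hm : 0 < m) (hn : 0 < n)
    (h : (Fin m → ℝ) → ℝ) (hh : IsNorm h)
    (φ : Euc n → Fin m → ℝ) (hLip : ∃ C : NNReal, LipschitzWith C φ) :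
    (∀ (θ : Fin m → ℝ) (x y : Euc n), (∑ i, θ i * (φ y i - φ x i)) ≤ h θ * ‖y - x‖) ↔
    (∀ᵐ x ∂(volume : Measure (Euc n)), DifferentiableAt ℝ φ x ∧
      ∀ u : Euc n, dualNorm h (fderiv ℝ φ x u) ≤ ‖u‖) := by
  obtain ⟨K, hK⟩ := hLip
  constructor
  · intro hyp
    exact forward hm h hh φ hK hyp
  · intro hyp θ x y
    exact backward hm h hh φ hK hyp θ x y
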